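/- arXiv:0903.4778 — 3 statements merged into one kernel-verified Lean document; each statement's English description precedes it below -/
import Mathlib

section
/- Let a, b, c be matrices with a ∈ ℂ^{n×n}, b ∈ ℂ^{n×k}, c ∈ ℂ^{k×n}, set a^× = a - b·c, and suppose Ω ∈ ℂ^{n×n} satisfies the Lyapunov equation i(Ω·(a^×)^* - a^×·Ω) = b·b^*. Define the 2n×2n block matrices A = [[a^×, -b·b^*],[0, (a^×)^*]] and P = [[I_n, iΩ],[0, 0]]. Then P is a projection (P² = P) and P commutes with A (PA = AP). -/
open Matrix

theorem stmt_4 {n k : ℕ}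
    (a : Matrix (Fin n) (Fin n) ℂ) (b : Matrix (Fin n) (Fin k) ℂ)
    (c : Matrix (Fin k) (Fin n) ℂ)
    (Ω : Matrix (Fin n) (Fin n) ℂ)
    (hΩ : Complex.I • (Ω * (a - b * c)ᴴ - (a - b * c) * Ω) = b * bᴴ)
    (A P : Matrix (Fin n ⊕ Fin n) (Fin n ⊕ Fin n) ℂ)
    (hA : A = Matrix.fromBlocks (a - b * c) (-(b * bᴴ)) 0 (a - b * c)ᴴ)
    (hP : P = Matrix.fromBlocks 1 (Complex.I • Ω) 0 0) :
    P * P = P ∧ P * A = A * P := by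
  subst hA hP
  constructor
  · rw [Matrix.fromBlocks_multiply]
    simp
  · have key : -(b * bᴴ) + Complex.I • (Ω * (a - b * c)ᴴ) = (a - b * c) * (Complex.I • Ω) := by
      rw [Matrix.mul_smul, ← hΩ, smul_sub]; abel
    rw [Matrix.fromBlocks_multiply, Matrix.fromBlocks_multiply]
    simp only [Matrix.one_mul, Matrix.mul_one, Matrix.mul_zero, Matrix.zero_mul,
      add_zero, zero_add, Matrix.smul_mul, key, Matrix.neg_mul, smul_zero]
end

section
/- Let β ∈ ℂ^{n×n} and γ₁, γ₂ ∈ ℂ^{n×r} with β^* - β = i·γ₂·γ₂^*. Define A = 2[[β^*, γ₂γ₂^*],[0, β]], B = √2·[[γ₂],[γ₁]], C = √2·[γ₁^*, γ₂^*], P = [[I_n, -iI_n],[0,0]], and S = [[I_n, iI_n],[0, I_n]]. Then S is invertible with S^{-1} = [[I_n, -iI_n],[0, I_n]], and A = S·diag(2β^*, 2β)·S^{-1}, P = S·[[I_n,0],[0,0]]·S^{-1}. -/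
open Matrix

theorem stmt_6 {n r : ℕ}
    (β : Matrix (Fin n) (Fin n) ℂ) (γ₁ γ₂ : Matrix (Fin n) (Fin r) ℂ)
    (hadm : βᴴ - β = Complex.I • (γ₂ * γ₂ᴴ))
    (A P S Sinv : Matrix (Fin n ⊕ Fin n) (Fin n ⊕ Fin n) ℂ)
    (hA : A = (2 : ℂ) • Matrix.fromBlocks βᴴ (γ₂ * γ₂ᴴ) 0 β)
    (hP : P = Matrix.fromBlocks 1 (-(Complex.I • (1 : Matrix (Fin n) (Fin n) ℂ))) 0 0)
    (hS : S = Matrix.fromBlocks 1 (Complex.I • (1 : Matrix (Fin n) (Fin n) ℂ)) 0 1)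
    (hSinv : Sinv = Matrix.fromBlocks 1 (-(Complex.I • (1 : Matrix (Fin n) (Fin n) ℂ))) 0 1) :
    S * Sinv = 1 ∧ Sinv * S = 1 ∧
    A = S * ((2 : ℂ) • Matrix.fromBlocks βᴴ 0 0 β) * Sinv ∧
    P = S * Matrix.fromBlocks 1 0 0 0 * Sinv := by
  have hgg : (γ₂ * γ₂ᴴ) = -Complex.I • (βᴴ - β) := by
    rw [hadm, smul_smul]; simp [Complex.I_mul_I]
  subst hA hP hS hSinv
  refine ⟨?_, ?_, ?_, ?_⟩
  · simp [Matrix.fromBlocks_multiply, ← Matrix.fromBlocks_one]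
  · simp [Matrix.fromBlocks_multiply, ← Matrix.fromBlocks_one]
  · simp only [Matrix.fromBlocks_multiply, Matrix.smul_mul, Matrix.mul_smul,
      Matrix.fromBlocks_smul]
    simp [Matrix.fromBlocks_multiply, hgg]
    congr 1 <;> module
  · simp [Matrix.fromBlocks_multiply]
end

section
/- Let β ∈ ℂ^{n×n}, γ₁, γ₂ ∈ ℂ^{n×r}, and define A = 2[[β^*, γ₂γ₂^*],[0, β]], B = √2·[[γ₂],[γ₁]], C = √2·[γ₁^*, γ₂^*], P = [[I_n, -iI_n],[0,0]]. Assume β^* - β = iγ₂γ₂^*. Then for every t ∈ ℝ, i·C·exp(-itA)·(I-P)·B = -2·(γ₁ + iγ₂)^*·exp(-2itβ)·γ₁ and -i·C·exp(-itA)·P·B = -2·γ₁^*·exp(-2itβ^*)·(γ₁ + iγ₂). -/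
open Matrix

private lemma exp_fromBlocks_diag {n : ℕ} (a d : Matrix (Fin n) (Fin n) ℂ) :
    NormedSpace.exp (Matrix.fromBlocks a 0 0 d) =
      Matrix.fromBlocks (NormedSpace.exp a) 0 0 (NormedSpace.exp d) := by
  have hc : CompleteSpace (Matrix (Fin n) (Fin n) ℂ) := inferInstance
  letI : SeminormedRing (Matrix (Fin n) (Fin n) ℂ) := Matrix.linftyOpSemiNormedRing
  letI : NormedRing (Matrix (Fin n) (Fin n) ℂ) := Matrix.linftyOpNormedRing
  letI : NormedAlgebra ℚ (Matrix (Fin n) (Fin n) ℂ) := Matrix.linftyOpNormedAlgebra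
  letI : NormedRing (Matrix (Fin n ⊕ Fin n) (Fin n ⊕ Fin n) ℂ) := Matrix.linftyOpNormedRing
  letI : NormedAlgebra ℚ (Matrix (Fin n ⊕ Fin n) (Fin n ⊕ Fin n) ℂ) :=
    Matrix.linftyOpNormedAlgebra
  haveI : @CompleteSpace (Matrix (Fin n) (Fin n) ℂ) PseudoMetricSpace.toUniformSpace := hc
  let φ : (Matrix (Fin n) (Fin n) ℂ × Matrix (Fin n) (Fin n) ℂ) →+*
      Matrix (Fin n ⊕ Fin n) (Fin n ⊕ Fin n) ℂ :=
    { toFun := fun p => Matrix.fromBlocks p.1 0 0 p.2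
      map_one' := Matrix.fromBlocks_one
      map_mul' := fun p q => by
        simp [Matrix.fromBlocks_multiply]
      map_zero' := by
        ext (i | i) (j | j) <;> simp
      map_add' := fun p q => by
        rw [Matrix.fromBlocks_add]
        simp }
  have hcont : Continuous φ :=
    Continuous.matrix_fromBlocks continuous_fst continuous_const continuous_const continuous_snd
  have h := NormedSpace.map_exp φ hcont (a, d)
  have hexp : NormedSpace.exp ((a, d) :
      Matrix (Fin n) (Fin n) ℂ × Matrix (Fin n) (Fin n) ℂ) =
      (NormedSpace.exp a, NormedSpace.exp d) :=
    Prod.ext (Prod.fst_exp _) (Prod.snd_exp _)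
  erw [hexp] at h
  exact h.symm

theorem stmt_7 {n r : ℕ}
    (β : Matrix (Fin n) (Fin n) ℂ) (γ₁ γ₂ : Matrix (Fin n) (Fin r) ℂ)
    (hadm : βᴴ - β = Complex.I • (γ₂ * γ₂ᴴ))
    (A P : Matrix (Fin n ⊕ Fin n) (Fin n ⊕ Fin n) ℂ)
    (B : Matrix (Fin n ⊕ Fin n) (Fin r) ℂ) (C : Matrix (Fin r) (Fin n ⊕ Fin n) ℂ)
    (hA : A = (2 : ℂ) • Matrix.fromBlocks βᴴ (γ₂ * γ₂ᴴ) 0 β)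
    (hB : B = (Real.sqrt 2 : ℂ) • Matrix.fromRows γ₂ γ₁)
    (hC : C = (Real.sqrt 2 : ℂ) • Matrix.fromCols γ₁ᴴ γ₂ᴴ)
    (hP : P = Matrix.fromBlocks 1 (-(Complex.I • (1 : Matrix (Fin n) (Fin n) ℂ))) 0 0) :
    ∀ t : ℝ,
      Complex.I • (C * NormedSpace.exp ((-(Complex.I * t)) • A) * (1 - P) * B) =
        (-2 : ℂ) • ((γ₁ + Complex.I • γ₂)ᴴ *
          NormedSpace.exp ((-(2 * Complex.I * t)) • β) * γ₁) ∧
      (-Complex.I) • (C * NormedSpace.exp ((-(Complex.I * t)) • A) * P * B) =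
        (-2 : ℂ) • (γ₁ᴴ * NormedSpace.exp ((-(2 * Complex.I * t)) • βᴴ) *
          (γ₁ + Complex.I • γ₂)) := by
  have hs2 : ((Real.sqrt 2 : ℝ) : ℂ) * ((Real.sqrt 2 : ℝ) : ℂ) = 2 := by
    rw [← Complex.ofReal_mul, Real.mul_self_sqrt (by norm_num)]
    norm_num
  have key : Complex.I • (β - βᴴ) = γ₂ * γ₂ᴴ := by
    have h1 : β - βᴴ = -(Complex.I • (γ₂ * γ₂ᴴ)) := by rw [← hadm, neg_sub]
    rw [h1, smul_neg, smul_smul, Complex.I_mul_I, neg_smul, one_smul, neg_neg]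
  intro t
  have hST : (Matrix.fromBlocks 1 (Complex.I • 1) 0 1 :
      Matrix (Fin n ⊕ Fin n) (Fin n ⊕ Fin n) ℂ) *
      Matrix.fromBlocks 1 (-(Complex.I • 1)) 0 1 = 1 := by
    rw [Matrix.fromBlocks_multiply]
    simp [Matrix.fromBlocks_one]
  have hTS := mul_eq_one_comm.mp hST
  have hSunit : IsUnit (Matrix.fromBlocks 1 (Complex.I • 1) 0 1 :
      Matrix (Fin n ⊕ Fin n) (Fin n ⊕ Fin n) ℂ) :=
    ⟨⟨_, _, hST, hTS⟩, rfl⟩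
  have hSinv : (Matrix.fromBlocks 1 (Complex.I • 1) 0 1 :
      Matrix (Fin n ⊕ Fin n) (Fin n ⊕ Fin n) ℂ)⁻¹ =
      Matrix.fromBlocks 1 (-(Complex.I • 1)) 0 1 :=
    Matrix.inv_eq_right_inv hST
  have hD : (-(Complex.I * (t : ℂ))) • A =
      Matrix.fromBlocks 1 (Complex.I • 1) 0 1 *
        Matrix.fromBlocks ((-(2 * Complex.I * (t : ℂ))) • βᴴ) 0 0
          ((-(2 * Complex.I * (t : ℂ))) • β) *
        Matrix.fromBlocks 1 (-(Complex.I • 1)) 0 1 := by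
    rw [hA, ← key, Matrix.fromBlocks_multiply, Matrix.fromBlocks_multiply, smul_smul,
      Matrix.fromBlocks_smul]
    simp only [Matrix.one_mul, Matrix.mul_one, Matrix.zero_mul, Matrix.mul_zero, add_zero,
      zero_add, Matrix.smul_mul, Matrix.mul_smul, smul_zero, Matrix.mul_neg, Matrix.neg_mul]
    rw [Matrix.fromBlocks_inj]
    refine ⟨?_, ?_, ?_, ?_⟩ <;> module
  have hexpA : NormedSpace.exp ((-(Complex.I * (t : ℂ))) • A) =
      Matrix.fromBlocks (NormedSpace.exp ((-(2 * Complex.I * (t : ℂ))) • βᴴ))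
        (-(Complex.I • NormedSpace.exp ((-(2 * Complex.I * (t : ℂ))) • βᴴ)) +
          Complex.I • NormedSpace.exp ((-(2 * Complex.I * (t : ℂ))) • β)) 0
        (NormedSpace.exp ((-(2 * Complex.I * (t : ℂ))) • β)) := by
    rw [hD, ← hSinv, Matrix.exp_conj _ _ hSunit, hSinv, exp_fromBlocks_diag,
      Matrix.fromBlocks_multiply, Matrix.fromBlocks_multiply]
    simp only [Matrix.one_mul, Matrix.mul_one, Matrix.zero_mul, Matrix.mul_zero, add_zero,
      zero_add, Matrix.smul_mul, Matrix.mul_smul, smul_zero, Matrix.mul_neg, Matrix.neg_mul,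
      neg_zero]
  have h1P : (1 : Matrix (Fin n ⊕ Fin n) (Fin n ⊕ Fin n) ℂ) - P =
      Matrix.fromBlocks 0 (Complex.I • 1) 0 1 := by
    rw [hP]
    ext (i | i) (j | j) <;>
      simp [Matrix.fromBlocks, Matrix.one_apply, Sum.inl.injEq, Sum.inr.injEq]
  constructor
  · rw [hexpA, hB, hC, h1P]
    simp only [Matrix.smul_mul, Matrix.mul_smul, smul_smul, Matrix.fromCols_mul_fromBlocks,
      Matrix.fromCols_mul_fromRows, Matrix.mul_zero, Matrix.zero_mul, add_zero, zero_add,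
      Matrix.mul_add, Matrix.add_mul, Matrix.mul_neg, Matrix.neg_mul, Matrix.mul_one,
      Matrix.conjTranspose_add, Matrix.conjTranspose_smul, Complex.star_def, Complex.conj_I]
    rw [hs2]
    match_scalars <;> ring_nf <;> simp [Complex.I_sq]
  · rw [hexpA, hB, hC, hP]
    simp only [Matrix.smul_mul, Matrix.mul_smul, smul_smul, Matrix.fromCols_mul_fromBlocks,
      Matrix.fromCols_mul_fromRows, Matrix.mul_zero, Matrix.zero_mul, add_zero, zero_add,
      Matrix.mul_add, Matrix.add_mul, Matrix.mul_neg, Matrix.neg_mul, Matrix.mul_one,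
      Matrix.conjTranspose_add, Matrix.conjTranspose_smul, Complex.star_def, Complex.conj_I]
    rw [hs2]
    match_scalars <;> ring_nf <;> simp [Complex.I_sq]
end
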